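/- If R is right small injective, then R is right mininjective: every R-homomorphism from a minimal right ideal of R to R_R extends to an endomorphism of R_R. -/

import Mathlib

/-- A right ideal `I` of `R` (viewed as a submodule of `R` over `Rᵐᵒᵖ`) is small if
`I + K ≠ R` for every proper right ideal `K`. -/
def IsSmallRightIdeal {R : Type*} [Ring R] (I : Submodule Rᵐᵒᵖ R) : Prop :=
  ∀ K : Submodule Rᵐᵒᵖ R, I ⊔ K = ⊤ → K = ⊤

/-- A right `R`-module `M` is small injective if every `R`-homomorphism from a small right
ideal of `R` to `M` extends to a homomorphism `R → M`. -/
def SmallInjective (R : Type*) [Ring R] (M : Type*) [AddCommGroup M] [Module Rᵐᵒᵖ M] : Prop :=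
  ∀ I : Submodule Rᵐᵒᵖ R, IsSmallRightIdeal I → ∀ f : I →ₗ[Rᵐᵒᵖ] M,
    ∃ g : R →ₗ[Rᵐᵒᵖ] M, ∀ x : I, g x = f x


/-- If `R` is right small injective, then `R` is right mininjective: every homomorphism
from a minimal right ideal of `R` to `R` extends to an endomorphism of `R` as a right
`R`-module. -/
theorem stmt_6 {R : Type*} [Ring R] (h : SmallInjective R R)
    (I : Submodule Rᵐᵒᵖ R) (hI : IsAtom I) (f : I →ₗ[Rᵐᵒᵖ] R) :
    ∃ g : R →ₗ[Rᵐᵒᵖ] R, ∀ x : I, g x = f x := by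
  by_cases hs : IsSmallRightIdeal I
  · exact h I hs f
  · simp only [IsSmallRightIdeal, not_forall] at hs
    obtain ⟨K, hK, hKne⟩ := hs
    have hdisj : Disjoint I K := by
      rw [disjoint_iff]
      rcases lt_or_eq_of_le (inf_le_left : I ⊓ K ≤ I) with hlt | heq
      · exact hI.2 _ hlt
      · exfalso
        apply hKne
        have hIK : I ≤ K := heq ▸ inf_le_right
        rw [← hK, sup_eq_right.mpr hIK]
    have hcompl : IsCompl I K := ⟨hdisj, codisjoint_iff.mpr hK⟩
    refine ⟨f ∘ₗ I.projectionOnto K hcompl, fun x => ?_⟩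
    simp [Submodule.projectionOnto_apply_left hcompl x]
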